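/- Let n ≥ 1 and let x_1 ≤ x_2 ≤ … ≤ x_{n+1} be real numbers. Then ∫_{W^{n,n+1}(x)} det( sin(i·y_j) )_{i,j=1}^n dy_1⋯dy_n = ((-1)^n/n!) · det( cos((i-1)·x_j) )_{i,j=1}^{n+1}. (This is, up to a constant, the paper's identity h_{n+1} = Λ_{n,n+1} Π_{n,n+1} ĥ_n for Brownian motions in an interval.) -/

import Mathlib

open MeasureTheory


lemma det_cos_diff (n : ℕ) (x : Fin (n + 1) → ℝ) :
    Matrix.det (Matrix.of fun i j : Fin n =>
        Real.cos ((((i : ℕ) : ℝ) + 1) * x j.castSucc) - Real.cos ((((i : ℕ) : ℝ) + 1) * x j.succ))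
      = (-1 : ℝ) ^ n *
        Matrix.det (Matrix.of fun i j : Fin (n + 1) => Real.cos (((i : ℕ) : ℝ) * x j)) := by
  set A : Matrix (Fin (n+1)) (Fin (n+1)) ℝ :=
    Matrix.of fun i j => Real.cos (((i : ℕ) : ℝ) * x j) with hA
  set E : Matrix (Fin (n+1)) (Fin (n+1)) ℝ :=
    Matrix.of fun j k => (if j = k then (1:ℝ) else 0) +
      (if (j:ℕ) = (k:ℕ) + 1 then (-1:ℝ) else 0) with hE
  have hEdet : E.det = 1 := by
    rw [Matrix.det_of_lowerTriangular E (by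
      intro i j hij
      have hij' : (i:ℕ) < (j:ℕ) := hij
      simp only [hE, Matrix.of_apply]
      rw [if_neg (fun h => by subst h; omega), if_neg (by omega)]
      ring)]
    apply Finset.prod_eq_one
    intro i _
    simp [hE]
  -- entries of A * E
  have hAE : ∀ (i : Fin (n+1)) (k : Fin (n+1)),
      (A * E) i k = A i k + (if h : (k:ℕ) < n then -A i ⟨(k:ℕ)+1, by omega⟩ else 0) := by
    intro i k
    rw [Matrix.mul_apply]
    simp only [hE, Matrix.of_apply, mul_add]
    rw [Finset.sum_add_distrib]
    congr 1
    · simp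
    · by_cases h : (k:ℕ) < n
      · rw [dif_pos h]
        rw [Finset.sum_eq_single (⟨(k:ℕ)+1, by omega⟩ : Fin (n+1))]
        · rw [if_pos rfl]; ring
        · intro b _ hb
          rw [if_neg (fun hc => hb (Fin.ext hc)), mul_zero]
        · simp
      · rw [dif_neg h]
        apply Finset.sum_eq_zero
        intro j _
        rw [if_neg (by omega), mul_zero]
  have hA0 : ∀ j : Fin (n+1), A 0 j = 1 := by
    intro j; simp [hA]
  have hrow0 : ∀ k : Fin (n+1), (A * E) 0 k = if k = Fin.last n then 1 else 0 := by
    intro k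
    rw [hAE]
    by_cases hk : (k:ℕ) < n
    · rw [dif_pos hk, if_neg (by intro h; subst h; simp at hk), hA0, hA0]; ring
    · have : k = Fin.last n := Fin.ext (by simp only [Fin.val_last]; omega)
      rw [dif_neg hk, if_pos this, hA0]; ring
  have hsub : ((A * E).submatrix Fin.succ (Fin.last n).succAbove) =
      Matrix.of (fun i j : Fin n =>
        Real.cos ((((i : ℕ) : ℝ) + 1) * x j.castSucc) -
          Real.cos ((((i : ℕ) : ℝ) + 1) * x j.succ)) := by
    ext i j
    rw [Matrix.submatrix_apply, Fin.succAbove_last, hAE]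
    rw [dif_pos (by simpa using j.isLt)]
    have h1 : (⟨((j.castSucc : ℕ)) + 1, by have := j.isLt; simp only [Fin.coe_castSucc]; omega⟩ : Fin (n+1)) = j.succ := by
      simp [Fin.ext_iff]
    rw [h1]
    simp only [hA, Matrix.of_apply]
    push_cast [Fin.val_succ]
    ring
  have hAdet : A.det = (-1:ℝ)^n * Matrix.det (Matrix.of (fun i j : Fin n =>
      Real.cos ((((i : ℕ) : ℝ) + 1) * x j.castSucc) -
        Real.cos ((((i : ℕ) : ℝ) + 1) * x j.succ))) := by
    rw [show A.det = (A * E).det by rw [Matrix.det_mul, hEdet, mul_one],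
      Matrix.det_succ_row_zero]
    rw [Finset.sum_eq_single (Fin.last n)]
    · rw [hrow0, if_pos rfl, hsub, Fin.val_last]; ring
    · intro b _ hb
      rw [hrow0, if_neg hb]; ring
    · simp
  rw [hAdet, ← mul_assoc, ← mul_pow]
  norm_num



lemma integral_prod_sin_pi (n : ℕ) (x : Fin (n + 1) → ℝ) (hx : Monotone x)
    (c : Fin n → ℝ) (hc : ∀ i, c i ≠ 0) :
    ∫ y in Set.univ.pi (fun j : Fin n => Set.Icc (x j.castSucc) (x j.succ)),
      ∏ j, Real.sin (c j * y j)
    = ∏ j, ((Real.cos (c j * x j.castSucc) - Real.cos (c j * x j.succ)) / c j) := by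
  set s : Fin n → Set ℝ := fun j => Set.Icc (x j.castSucc) (x j.succ) with hs
  have hS : MeasurableSet (Set.univ.pi s) := MeasurableSet.univ_pi fun j => measurableSet_Icc
  rw [← integral_indicator hS]
  have hind : (Set.univ.pi s).indicator (fun y => ∏ j, Real.sin (c j * y j)) =
      fun y => ∏ j, (s j).indicator (fun t => Real.sin (c j * t)) (y j) := by
    funext y
    by_cases hy : y ∈ Set.univ.pi s
    · rw [Set.indicator_of_mem hy]
      exact Finset.prod_congr rfl fun j _ =>
        (Set.indicator_of_mem (hy j (Set.mem_univ j))
          (fun t => Real.sin (c j * t))).symm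
    · rw [Set.indicator_of_notMem hy]
      simp only [Set.mem_pi, Set.mem_univ, forall_true_left, not_forall] at hy
      obtain ⟨j, hj⟩ := hy
      exact (Finset.prod_eq_zero (Finset.mem_univ j)
        (Set.indicator_of_notMem hj _)).symm
  rw [hind, integral_fintype_prod_volume_eq_prod (fun j t => (s j).indicator (fun u => Real.sin (c j * u)) t)]
  refine Finset.prod_congr rfl fun j _ => ?_
  rw [integral_indicator measurableSet_Icc]
  have hab : x j.castSucc ≤ x j.succ := hx (Fin.castSucc_le_succ j)
  rw [integral_Icc_eq_integral_Ioc, ← intervalIntegral.integral_of_le hab,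
    intervalIntegral.integral_comp_mul_left _ (hc j), integral_sin, smul_eq_mul]
  ring


lemma prod_fin_add_one_eq_factorial (n : ℕ) :
    (∏ i : Fin n, (((i : ℕ) : ℝ) + 1)) = (Nat.factorial n : ℝ) := by
  induction n with
  | zero => simp
  | succ m ih =>
    rw [Fin.prod_univ_castSucc]
    simp [ih, Nat.factorial_succ]
    ring

set_option maxHeartbeats 1000000 in
/-- The identity `h_{n+1} = Λ_{n,n+1} Π_{n,n+1} ĥ_n` for Brownian motions in an interval:
`∫_{W^{n,n+1}(x)} det(sin(i·y_j))_{i,j=1}^n dy = ((-1)^n/n!) · det(cos((i-1)·x_j))_{i,j=1}^{n+1}`. -/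
theorem integral_det_sin_over_interlacing_region (n : ℕ) (hn : 1 ≤ n)
    (x : Fin (n + 1) → ℝ) (hx : Monotone x) :
    ∫ y in Set.univ.pi (fun j : Fin n => Set.Icc (x j.castSucc) (x j.succ)),
        Matrix.det (Matrix.of fun i j : Fin n => Real.sin ((((i : ℕ) : ℝ) + 1) * y j))
      = ((-1 : ℝ) ^ n / (Nat.factorial n : ℝ)) *
          Matrix.det (Matrix.of fun i j : Fin (n + 1) => Real.cos (((i : ℕ) : ℝ) * x j)) := by
  have hK : IsCompact (Set.univ.pi (fun j : Fin n => Set.Icc (x j.castSucc) (x j.succ))) :=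
    isCompact_univ_pi fun j => isCompact_Icc
  have step1 : ∫ y in Set.univ.pi (fun j : Fin n => Set.Icc (x j.castSucc) (x j.succ)),
      Matrix.det (Matrix.of fun i j : Fin n => Real.sin ((((i : ℕ) : ℝ) + 1) * y j))
      = ∑ σ : Equiv.Perm (Fin n), ((Equiv.Perm.sign σ : ℤ) : ℝ) *
          ∫ y in Set.univ.pi (fun j : Fin n => Set.Icc (x j.castSucc) (x j.succ)),
            ∏ j, Real.sin ((((σ j : ℕ) : ℝ) + 1) * y j) := by
    simp only [Matrix.det_apply', Matrix.of_apply]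
    rw [integral_finset_sum]
    · exact Finset.sum_congr rfl fun σ _ => integral_const_mul _ _
    · intro σ _
      apply ContinuousOn.integrableOn_compact hK
      apply Continuous.continuousOn
      fun_prop
  rw [step1]
  have step2 : ∀ σ : Equiv.Perm (Fin n),
      ∫ y in Set.univ.pi (fun j : Fin n => Set.Icc (x j.castSucc) (x j.succ)),
          ∏ j, Real.sin ((((σ j : ℕ) : ℝ) + 1) * y j)
        = ∏ j, ((Real.cos (((((σ j : ℕ)) : ℝ) + 1) * x j.castSucc) -
            Real.cos ((((σ j : ℕ) : ℝ) + 1) * x j.succ)) / (((σ j : ℕ) : ℝ) + 1)) := by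
    intro σ
    exact integral_prod_sin_pi n x hx (fun j => ((σ j : ℕ) : ℝ) + 1)
      (fun j => by positivity)
  simp only [step2]
  have step3 : ∑ σ : Equiv.Perm (Fin n), ((Equiv.Perm.sign σ : ℤ) : ℝ) *
      ∏ j, ((Real.cos (((((σ j : ℕ)) : ℝ) + 1) * x j.castSucc) -
          Real.cos ((((σ j : ℕ) : ℝ) + 1) * x j.succ)) / (((σ j : ℕ) : ℝ) + 1))
      = Matrix.det (Matrix.of fun i j : Fin n =>
          ((Real.cos ((((i : ℕ) : ℝ) + 1) * x j.castSucc) -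
            Real.cos ((((i : ℕ) : ℝ) + 1) * x j.succ)) / (((i : ℕ) : ℝ) + 1))) := by
    rw [Matrix.det_apply']
    simp only [Matrix.of_apply]
  rw [step3]
  have step4 : Matrix.det (Matrix.of fun i j : Fin n =>
      ((Real.cos ((((i : ℕ) : ℝ) + 1) * x j.castSucc) -
        Real.cos ((((i : ℕ) : ℝ) + 1) * x j.succ)) / (((i : ℕ) : ℝ) + 1)))
      = (∏ i : Fin n, (1 / (((i : ℕ) : ℝ) + 1))) *
        Matrix.det (Matrix.of fun i j : Fin n =>
          (Real.cos ((((i : ℕ) : ℝ) + 1) * x j.castSucc) -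
            Real.cos ((((i : ℕ) : ℝ) + 1) * x j.succ))) := by
    rw [← Matrix.det_mul_column]
    congr 1
    ext i j
    simp only [Matrix.of_apply]
    ring
  rw [step4, det_cos_diff n x]
  have hfac : (∏ i : Fin n, (1 / (((i : ℕ) : ℝ) + 1))) = 1 / (Nat.factorial n : ℝ) := by
    rw [Finset.prod_div_distrib, Finset.prod_const_one, prod_fin_add_one_eq_factorial]
  rw [hfac]
  ring
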